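/- Let A_l, A_u, L, U ∈ ℝⁿ with A_l ≤ A_u and L ≤ U componentwise. Let f : ℝⁿ → [0, ∞) be a measurable probability density with respect to Lebesgue measure (∫ f = 1) such that f = 0 almost everywhere outside the box B = {s : A_l ≤ s ≤ A_u} and f(s) ≤ U_f for almost every s. Let b₁ = A_u - A_l and b₂ = clip(A_u, L, U) - clip(A_l, L, U), where clip(x, L, U)_i = min(max(x_i, L_i), U_i). Then the safety probability satisfies ∫_{\{s : L ≤ s ≤ U\}} f(s) ds ≥ 1 - U_f · ( ∏_{i=0}^{n-1} (b₁)_i - ∏_{i=0}^{n-1} (b₂)_i ). -/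

import Mathlib

open MeasureTheory

lemma clip_key (al au l u : ℝ) (hA : al ≤ au) (hLU : l ≤ u) :
    min (max au l) u - min (max al l) u = max (min au u - max al l) 0 := by
  simp only [min_def, max_def]
  split_ifs <;> linarith

theorem stmt10 (n : ℕ) (Al Au L U : Fin n → ℝ) (hA : Al ≤ Au) (hLU : L ≤ U)
    (clip : (Fin n → ℝ) → (Fin n → ℝ) → (Fin n → ℝ) → (Fin n → ℝ))
    (hclip : ∀ x L' U' i, clip x L' U' i = min (max (x i) (L' i)) (U' i))
    (b₁ b₂ : Fin n → ℝ) (hb₁ : b₁ = Au - Al) (hb₂ : b₂ = clip Au L U - clip Al L U)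
    (f : (Fin n → ℝ) → ℝ) (Uf : ℝ)
    (hf : Measurable f) (hf0 : ∀ x, 0 ≤ f x)
    (hnorm : ∫⁻ x, ENNReal.ofReal (f x) ∂(volume : Measure (Fin n → ℝ)) = 1)
    (hsupp : ∀ᵐ x ∂(volume : Measure (Fin n → ℝ)), x ∉ Set.Icc Al Au → f x = 0)
    (hbound : ∀ᵐ x ∂(volume : Measure (Fin n → ℝ)), f x ≤ Uf) :
    ENNReal.ofReal (1 - Uf * (∏ i, b₁ i - ∏ i, b₂ i)) ≤
      ∫⁻ x in Set.Icc L U, ENNReal.ofReal (f x) ∂(volume : Measure (Fin n → ℝ)) := by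
  set I : Set (Fin n → ℝ) := Set.Icc Al Au with hI
  set J : Set (Fin n → ℝ) := Set.Icc L U with hJ
  set K : Set (Fin n → ℝ) := I ∩ J with hK
  have hb₂' : ∀ i, b₂ i = max (min (Au i) (U i) - max (Al i) (L i)) 0 := by
    intro i
    rw [hb₂]
    simp only [Pi.sub_apply, hclip]
    exact clip_key (Al i) (Au i) (L i) (U i) (hA i) (hLU i)
  have hb₂0 : ∀ i, 0 ≤ b₂ i := fun i => (hb₂' i) ▸ le_max_right _ _
  have hb₁0 : ∀ i, 0 ≤ b₁ i := fun i => by rw [hb₁]; simpa using sub_nonneg.2 (hA i)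
  have hb₂₁ : ∀ i, b₂ i ≤ b₁ i := by
    intro i
    rw [hb₂' i, hb₁]
    apply max_le
    · simp only [Pi.sub_apply]
      exact sub_le_sub (min_le_left _ _) (le_max_left _ _)
    · simpa using sub_nonneg.2 (hA i)
  have hP2 : 0 ≤ ∏ i, b₂ i := Finset.prod_nonneg fun i _ => hb₂0 i
  have hP : ∏ i, b₂ i ≤ ∏ i, b₁ i :=
    Finset.prod_le_prod (fun i _ => hb₂0 i) (fun i _ => hb₂₁ i)
  -- Uf ≥ 0
  have hvol : (volume : Measure (Fin n → ℝ)) ≠ 0 := by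
    intro h
    rw [h] at hnorm
    simp at hnorm
  haveI : (ae (volume : Measure (Fin n → ℝ))).NeBot := ae_neBot.2 hvol
  obtain ⟨x₀, hx₀⟩ := hbound.exists
  have hUf : 0 ≤ Uf := le_trans (hf0 x₀) hx₀
  have hc : 0 ≤ Uf * (∏ i, b₁ i - ∏ i, b₂ i) := mul_nonneg hUf (by linarith)
  have mI : MeasurableSet I := measurableSet_Icc
  have mJ : MeasurableSet J := measurableSet_Icc
  have mK : MeasurableSet K := mI.inter mJ
  have hfm : Measurable fun x => ENNReal.ofReal (f x) := hf.ennreal_ofReal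
  -- integral over I is 1
  have hIc : ∫⁻ x in Iᶜ, ENNReal.ofReal (f x) = 0 := by
    rw [lintegral_eq_zero_iff hfm]
    rw [Filter.EventuallyEq, ae_restrict_iff' mI.compl]
    filter_upwards [hsupp] with x hx hxI
    simp [hx hxI]
  have hIint : ∫⁻ x in I, ENNReal.ofReal (f x) = 1 := by
    rw [← lintegral_add_compl (fun x => ENNReal.ofReal (f x)) mI] at hnorm
    rw [hIc, add_zero] at hnorm
    exact hnorm
  -- split
  have hsplit : (∫⁻ x in I ∩ J, ENNReal.ofReal (f x)) + ∫⁻ x in I \ J, ENNReal.ofReal (f x)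
      = ∫⁻ x in I, ENNReal.ofReal (f x) :=
    lintegral_inter_add_diff _ I mJ
  -- volumes
  have hvolI : volume I = ENNReal.ofReal (∏ i, b₁ i) := by
    rw [hI, Real.volume_Icc_pi, ENNReal.ofReal_prod_of_nonneg fun i _ => hb₁0 i]
    simp [hb₁]
  have hvolK : volume K = ENNReal.ofReal (∏ i, b₂ i) := by
    rw [hK, hI, hJ, Set.Icc_inter_Icc, Real.volume_Icc_pi,
      ENNReal.ofReal_prod_of_nonneg fun i _ => hb₂0 i]
    refine Finset.prod_congr rfl fun i _ => ?_
    simp only [Pi.inf_apply, Pi.sup_apply]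
    rw [hb₂' i]
    rcases le_or_gt (max (Al i) (L i)) (min (Au i) (U i)) with h | h
    · exact (congrArg ENNReal.ofReal (max_eq_left (sub_nonneg.2 h))).symm
    · rw [max_eq_right (by linarith : min (Au i) (U i) - max (Al i) (L i) ≤ 0),
        ENNReal.ofReal_zero, ENNReal.ofReal_eq_zero]
      linarith
  have hKfin : volume K ≠ ⊤ := by rw [hvolK]; exact ENNReal.ofReal_ne_top
  have hdiffvol : volume (I \ J) = ENNReal.ofReal (∏ i, b₁ i) - ENNReal.ofReal (∏ i, b₂ i) := by
    have h1 : I \ J = I \ K := (Set.diff_self_inter).symm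
    rw [h1, measure_diff Set.inter_subset_left mK.nullMeasurableSet hKfin, hvolI, hvolK]
  -- bound on the diff integral
  have hdiff : ∫⁻ x in I \ J, ENNReal.ofReal (f x)
      ≤ ENNReal.ofReal (Uf * (∏ i, b₁ i - ∏ i, b₂ i)) := by
    calc ∫⁻ x in I \ J, ENNReal.ofReal (f x)
        ≤ ∫⁻ _ in I \ J, ENNReal.ofReal Uf := by
          refine lintegral_mono_ae ?_
          refine ae_restrict_of_ae ?_
          filter_upwards [hbound] with x hx
          exact ENNReal.ofReal_le_ofReal hx
      _ = ENNReal.ofReal Uf * volume (I \ J) := by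
          rw [setLIntegral_const, mul_comm]
      _ = ENNReal.ofReal (Uf * (∏ i, b₁ i - ∏ i, b₂ i)) := by
          rw [hdiffvol, ← ENNReal.ofReal_sub _ hP2, ← ENNReal.ofReal_mul hUf]
  calc ENNReal.ofReal (1 - Uf * (∏ i, b₁ i - ∏ i, b₂ i))
      = 1 - ENNReal.ofReal (Uf * (∏ i, b₁ i - ∏ i, b₂ i)) := by
        rw [ENNReal.ofReal_sub _ hc, ENNReal.ofReal_one]
    _ ≤ ∫⁻ x in K, ENNReal.ofReal (f x) := by
        rw [tsub_le_iff_right]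
        calc (1 : ENNReal) = ∫⁻ x in I, ENNReal.ofReal (f x) := hIint.symm
          _ = (∫⁻ x in I ∩ J, ENNReal.ofReal (f x)) + ∫⁻ x in I \ J, ENNReal.ofReal (f x) :=
              hsplit.symm
          _ ≤ (∫⁻ x in K, ENNReal.ofReal (f x))
              + ENNReal.ofReal (Uf * (∏ i, b₁ i - ∏ i, b₂ i)) := add_le_add le_rfl hdiff
    _ ≤ ∫⁻ x in J, ENNReal.ofReal (f x) := lintegral_mono_set Set.inter_subset_right
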